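/- Let A, B ∈ ℝ², let ρ be a linear automorphism of ℝ² satisfying ρ(A) = B and ρ(B) = B − A, and let m be a positive integer. Let α be the translation z ↦ z + A and β the translation z ↦ z + B, viewed as elements of the group of bijections of ℝ². Then the subgroup L generated by {α^m, β^m} is a normal subgroup of the subgroup G generated by {α, β, ρ}. -/

import Mathlib

private lemma addRight_pow' (v : ℝ × ℝ) (m : ℕ) :
    (Equiv.addRight v) ^ m = Equiv.addRight (m • v) := by
  induction m with
  | zero => apply Equiv.ext; intro x; simp
  | succ n ih =>
      rw [pow_succ, ih]; apply Equiv.ext; intro x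
      simp only [Equiv.Perm.mul_apply, Equiv.coe_addRight, succ_nsmul]
      abel

private lemma conj_lin (σ : (ℝ × ℝ) ≃ₗ[ℝ] ℝ × ℝ) (v : ℝ × ℝ) :
    (σ.toEquiv : Equiv.Perm (ℝ × ℝ)) * Equiv.addRight v * (σ.toEquiv : Equiv.Perm (ℝ × ℝ))⁻¹
      = Equiv.addRight (σ v) := by
  apply Equiv.ext; intro x
  simp [Equiv.Perm.mul_apply, map_add, Equiv.Perm.inv_def]

private lemma conj_eq_self {G : Type*} [Group G] {g x : G} (h : Commute g x) :
    g * x * g⁻¹ = x := by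
  rw [h.eq, mul_assoc]; simp

/-- Claim 4: with `ρ A = B`, `ρ B = B - A` (rotation by 60°), the subgroup generated
by `α^m, β^m` is normal in the subgroup generated by `α, β, ρ`. -/
theorem stmt6 (A B : ℝ × ℝ) (ρ : (ℝ × ℝ) ≃ₗ[ℝ] ℝ × ℝ)
    (hA : ρ A = B) (hB : ρ B = B - A) (m : ℕ) (hm : 0 < m)
    (L G : Subgroup (Equiv.Perm (ℝ × ℝ)))
    (hL : L = Subgroup.closure
      ({(Equiv.addRight A) ^ m, (Equiv.addRight B) ^ m} : Set (Equiv.Perm (ℝ × ℝ))))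
    (hG : G = Subgroup.closure
      ({Equiv.addRight A, Equiv.addRight B, (ρ.toEquiv : Equiv.Perm (ℝ × ℝ))} :
        Set (Equiv.Perm (ℝ × ℝ)))) :
    L ≤ G ∧ (L.subgroupOf G).Normal := by
  have hαm : (Equiv.addRight A) ^ m ∈ L := hL ▸ Subgroup.subset_closure (by simp)
  have hβm : (Equiv.addRight B) ^ m ∈ L := hL ▸ Subgroup.subset_closure (by simp)
  have hLG : L ≤ G := by
    rw [hL, hG, Subgroup.closure_le]
    rintro x (rfl | rfl)
    · exact pow_mem (Subgroup.subset_closure (by simp)) m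
    · exact pow_mem (Subgroup.subset_closure (by simp)) m
  refine ⟨hLG, ?_⟩
  have hsymmB : ρ.symm B = A := by rw [← hA, LinearEquiv.symm_apply_apply]
  have hsymmA : ρ.symm A = A - B := by
    rw [LinearEquiv.symm_apply_eq, map_sub, hA, hB]; abel
  have key : ∀ g : Equiv.Perm (ℝ × ℝ),
      (g * (Equiv.addRight A) ^ m * g⁻¹ ∈ L ∧ g * (Equiv.addRight B) ^ m * g⁻¹ ∈ L) →
      ∀ n ∈ L, g * n * g⁻¹ ∈ L := by
    intro g hg n hn
    rw [hL] at hn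
    induction hn using Subgroup.closure_induction with
    | mem x hx => rcases hx with rfl | rfl; exacts [hg.1, hg.2]
    | one => simpa using one_mem L
    | mul a b _ _ ha hb =>
        have := mul_mem ha hb
        simpa [mul_assoc] using this
    | inv a _ ha =>
        have := inv_mem ha
        simpa [mul_assoc] using this
  have comm : ∀ u v : ℝ × ℝ, Commute (Equiv.addRight u) (Equiv.addRight v) := by
    intro u v; apply Equiv.ext; intro x
    simp only [Equiv.Perm.mul_apply, Equiv.coe_addRight]
    abel
  have trans_norm : ∀ v : ℝ × ℝ, Equiv.addRight v ∈ Subgroup.normalizer (L : Set (Equiv.Perm (ℝ × ℝ))) := by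
    intro v
    rw [Subgroup.mem_normalizer_iff]
    intro n
    constructor
    · intro hn
      refine key _ ⟨?_, ?_⟩ n hn
      · rw [conj_eq_self ((comm v A).pow_right m)]; exact hαm
      · rw [conj_eq_self ((comm v B).pow_right m)]; exact hβm
    · intro hn
      have h2 := key (Equiv.addRight v)⁻¹ ?_ _ hn
      · rwa [show (Equiv.addRight v)⁻¹ * (Equiv.addRight v * n * (Equiv.addRight v)⁻¹) *
          ((Equiv.addRight v)⁻¹)⁻¹ = n from by group] at h2
      constructor
      · rw [conj_eq_self ((comm v A).pow_right m).inv_left]; exact hαm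
      · rw [conj_eq_self ((comm v B).pow_right m).inv_left]; exact hβm
  have conj_pow : ∀ (σ : (ℝ × ℝ) ≃ₗ[ℝ] ℝ × ℝ) (v : ℝ × ℝ),
      (σ.toEquiv : Equiv.Perm (ℝ × ℝ)) * (Equiv.addRight v) ^ m *
        (σ.toEquiv : Equiv.Perm (ℝ × ℝ))⁻¹ = Equiv.addRight (m • σ v) := by
    intro σ v
    rw [addRight_pow', conj_lin, map_nsmul]
  have hABm : Equiv.addRight (m • B - m • A) ∈ L := by
    have h : Equiv.addRight (m • B - m • A)
        = (Equiv.addRight B) ^ m * ((Equiv.addRight A) ^ m)⁻¹ := by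
      rw [addRight_pow', addRight_pow']
      apply Equiv.ext; intro x
      simp only [Equiv.Perm.mul_apply, Equiv.coe_addRight, Equiv.Perm.inv_def,
        Equiv.addRight_symm, Equiv.coe_addRight]
      abel
    rw [h]; exact mul_mem hβm (inv_mem hαm)
  have hBAm : Equiv.addRight (m • A - m • B) ∈ L := by
    have h : Equiv.addRight (m • A - m • B)
        = (Equiv.addRight A) ^ m * ((Equiv.addRight B) ^ m)⁻¹ := by
      rw [addRight_pow', addRight_pow']
      apply Equiv.ext; intro x
      simp only [Equiv.Perm.mul_apply, Equiv.coe_addRight, Equiv.Perm.inv_def,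
        Equiv.addRight_symm, Equiv.coe_addRight]
      abel
    rw [h]; exact mul_mem hαm (inv_mem hβm)
  have hinv : ((ρ.toEquiv : Equiv.Perm (ℝ × ℝ)))⁻¹ = (ρ.symm.toEquiv : Equiv.Perm (ℝ × ℝ)) := rfl
  have rho_norm : (ρ.toEquiv : Equiv.Perm (ℝ × ℝ)) ∈ Subgroup.normalizer (L : Set (Equiv.Perm (ℝ × ℝ))) := by
    rw [Subgroup.mem_normalizer_iff]
    intro n
    constructor
    · intro hn
      refine key _ ⟨?_, ?_⟩ n hn
      · rw [conj_pow, hA, ← addRight_pow']; exact hβm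
      · rw [conj_pow, hB]
        simpa [smul_sub] using hABm
    · intro hn
      have h2 := key ((ρ.toEquiv : Equiv.Perm (ℝ × ℝ)))⁻¹ ?_ _ hn
      · rwa [show ((ρ.toEquiv : Equiv.Perm (ℝ × ℝ)))⁻¹ *
          ((ρ.toEquiv : Equiv.Perm (ℝ × ℝ)) * n * ((ρ.toEquiv : Equiv.Perm (ℝ × ℝ)))⁻¹) *
          (((ρ.toEquiv : Equiv.Perm (ℝ × ℝ)))⁻¹)⁻¹ = n from by group] at h2
      constructor
      · rw [hinv, conj_pow, hsymmA]
        simpa [smul_sub] using hBAm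
      · rw [hinv, conj_pow, hsymmB, ← addRight_pow']; exact hαm
  have hGnorm : G ≤ Subgroup.normalizer (L : Set (Equiv.Perm (ℝ × ℝ))) := by
    rw [hG, Subgroup.closure_le]
    rintro x (rfl | rfl | rfl)
    exacts [trans_norm A, trans_norm B, rho_norm]
  refine ⟨fun n hn g => ?_⟩
  rw [Subgroup.mem_subgroupOf] at hn ⊢
  have := (Subgroup.mem_normalizer_iff.mp (hGnorm g.2) (n : Equiv.Perm (ℝ × ℝ))).mp hn
  simpa using this
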